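/- Let g be simply-laced simple, p ≥ h, α ∈ P_+ ∩ Q, λ_0 ∈ Λ_0 ∪ {0}, and λ_p ∈ Λ_p with (√p λ_p + ρ, θ) ≤ p. Then the character identity Σ_{σ∈W} (−1)^{l(σ)} q^{(1/2)|√p σ(α+λ_0+ρ) − λ_p − (1/√p)ρ|²} = Σ_{σ∈W} (−1)^{l(σ)} q^{(1/(2p))|overline{y_σ ∘ μ_λ} + ρ|²} holds as formal q-series, where y_σ = t_{σ(ω_{λ_0}) − (α+λ_0+ρ)} σ σ_{λ_0}^{-1} ∈ Ŵ, μ_λ = σ_{λ_0}(−p ω_{λ_0} + √p λ_p + ρ) − ρ + (p−h)Λ_0, and the bar denotes the classical (finite) part of an affine weight. -/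

import Mathlib

open scoped RealInnerProductSpace

/-- The character identity of Lemma 3.13/Theorem 3.15: for `p ≥ h`,
`α ∈ P₊ ∩ Q`, `λ₀ ∈ Λ₀ ∪ {0}` and `λ_p ∈ Λ_p` with `(√p λ_p + ρ, θ) ≤ p`,

`Σ_{σ∈W} (-1)^{l(σ)} q^{(1/2)|√p σ(α+λ₀+ρ) - λ_p - (1/√p)ρ|²}
  = Σ_{σ∈W} (-1)^{l(σ)} q^{(1/(2p))|bar(y_σ ∘ μ_λ) + ρ|²}`,

where `y_σ = t_{σ(ω_{λ₀}) - (α+λ₀+ρ)} σ σ_{λ₀}⁻¹ ∈ Ŵ`,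
`μ_λ = σ_{λ₀}(-p ω_{λ₀} + √p λ_p + ρ) - ρ + (p-h)Λ₀`, and
`bar(t_β τ ∘ μ) = τ(μ̄ + ρ) + p β - ρ` is the classical part of the affine dot
action at level `p - h` (so `bar(y_σ ∘ μ_λ) + ρ
  = (σ σ_{λ₀}⁻¹)(μ̄_λ + ρ) + p(σ(ω_{λ₀}) - (α+λ₀+ρ))`). -/
theorem character_identity_of_simple_quotient
    {V : Type*} [NormedAddCommGroup V] [InnerProductSpace ℝ V]
    -- the Weyl group, as a finite set of isometries with length function
    (W : Finset (V ≃ₗᵢ[ℝ] V)) (len : (V ≃ₗᵢ[ℝ] V) → ℕ)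
    (hone : (1 : V ≃ₗᵢ[ℝ] V) ∈ W)
    (hinv : ∀ σ ∈ W, σ⁻¹ ∈ W ∧ len σ⁻¹ = len σ)
    (hmul : ∀ σ ∈ W, ∀ τ ∈ W, σ * τ ∈ W ∧
        ((-1 : ℝ)) ^ len (σ * τ) = (-1 : ℝ) ^ len σ * (-1 : ℝ) ^ len τ)
    (ρ θ : V) (h p : ℕ) (hh : 1 ≤ h) (hp : h ≤ p)
    -- `α + λ₀ + ρ`, the minuscule weight `ω_{λ₀}` and the Weyl element
    -- `σ_{λ₀}` attached to `λ₀` as in Lemma 3.10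
    (α l0 ω0 : V) (σ0 : V ≃ₗᵢ[ℝ] V) (hσ0 : σ0 ∈ W)
    -- `λ_p ∈ Λ_p` with the alcove condition
    (lp : V)
    (hcond : ⟪Real.sqrt p • lp + ρ, θ⟫ ≤ (p : ℝ)) :
    -- the classical part of `μ_λ`
    let μbar : V := σ0 (-(p : ℝ) • ω0 + Real.sqrt p • lp + ρ) - ρ
    ∀ q : ℝ, 0 < q →
      (∑ σ ∈ W, (-1 : ℝ) ^ len σ *
          q ^ ((1 / 2) *
            ‖Real.sqrt p • σ (α + l0 + ρ) - lp - (Real.sqrt p)⁻¹ • ρ‖ ^ 2)) =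
        ∑ σ ∈ W, (-1 : ℝ) ^ len σ *
          q ^ ((1 / (2 * (p : ℝ))) *
            ‖(σ * σ0⁻¹) (μbar + ρ) +
                (p : ℝ) • (σ ω0 - (α + l0 + ρ))‖ ^ 2) := by
  intro μbar q hq
  have hp0 : (0:ℝ) < (p:ℝ) := by
    exact_mod_cast lt_of_lt_of_le hh hp
  set s : ℝ := Real.sqrt p with hsdef
  have hs0 : 0 < s := Real.sqrt_pos.mpr hp0
  have hs2 : s * s = (p:ℝ) := Real.mul_self_sqrt hp0.le
  refine Finset.sum_nbij' (fun σ => σ⁻¹) (fun σ => σ⁻¹) (fun a ha => (hinv a ha).1)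
    (fun a ha => (hinv a ha).1) (fun a _ => inv_inv a) (fun a _ => inv_inv a) ?_
  intro σ hσ
  have hlen : len σ⁻¹ = len σ := (hinv σ hσ).2
  rw [hlen]
  congr 1
  -- equality of exponents
  congr 1
  have key : (σ⁻¹ * σ0⁻¹) (μbar + ρ) + (p : ℝ) • (σ⁻¹ ω0 - (α + l0 + ρ))
      = σ⁻¹ (-(s • (s • σ (α + l0 + ρ) - lp - s⁻¹ • ρ))) := by
    have hμ : μbar + ρ = σ0 (-(p : ℝ) • ω0 + s • lp + ρ) := by
      simp [μbar, hsdef]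
    have harg : -(s • (s • σ (α + l0 + ρ) - lp - s⁻¹ • ρ))
        = s • lp + ρ - (p:ℝ) • σ (α + l0 + ρ) := by
      rw [smul_sub, smul_sub, smul_smul, hs2, smul_smul,
        mul_inv_cancel₀ hs0.ne', one_smul]
      abel
    rw [hμ, harg]
    simp only [LinearIsometryEquiv.coe_mul, Function.comp_apply, LinearIsometryEquiv.coe_inv,
      LinearIsometryEquiv.symm_apply_apply, map_add, map_sub, map_neg, map_smul,
      smul_sub]
    module
  rw [key, σ⁻¹.norm_map, norm_neg, norm_smul,
    Real.norm_of_nonneg hs0.le, mul_pow]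
  have : s ^ 2 = (p:ℝ) := by rw [sq, hs2]
  rw [this]
  field_simp
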